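/- Let α ∈ (1-√2, 1), γ = √2-1, v_α = (γ+α)/√2, and g_α(u) = (1-u) + (α-u)²/(1-u). Then for all a < b, lim_{t→∞} e^{2γ(1-α)t} ∫_a^b e^{-t g_α(v_α + r/√t)} dr = ∫_a^b e^{-(2√2/(1-α)) r²} dr. -/

import Mathlib

open Real Filter MeasureTheory Topology

/-- Laplace method limit: for `α ∈ (1-√2, 1)`, `γ = √2-1`, `v_α = (γ+α)/√2` and
`g_α(u) = (1-u)+(α-u)²/(1-u)`, for all `a < b`,
`e^{2γ(1-α)t} ∫_a^b e^{-t g_α(v_α + r/√t)} dr → ∫_a^b e^{-(2√2/(1-α)) r²} dr`. -/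
theorem laplace_method_limit (α γ v : ℝ) (h1 : 1 - Real.sqrt 2 < α) (h2 : α < 1)
    (hγ : γ = Real.sqrt 2 - 1) (hv : v = (γ + α) / Real.sqrt 2)
    (g : ℝ → ℝ) (hg : ∀ u : ℝ, g u = (1 - u) + (α - u) ^ 2 / (1 - u))
    (a b : ℝ) (hab : a < b) :
    Filter.Tendsto
      (fun t : ℝ => Real.exp (2 * γ * (1 - α) * t) *
        ∫ r in a..b, Real.exp (-t * g (v + r / Real.sqrt t)))
      Filter.atTop
      (nhds (∫ r in a..b, Real.exp (-(2 * Real.sqrt 2 / (1 - α)) * r ^ 2))) := by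
  have s2 : Real.sqrt 2 * Real.sqrt 2 = 2 := Real.mul_self_sqrt (by norm_num)
  have hs2 : (0:ℝ) < Real.sqrt 2 := Real.sqrt_pos.mpr (by norm_num)
  obtain ⟨w, hw⟩ : ∃ w : ℝ, w = (1 - α) / Real.sqrt 2 := ⟨_, rfl⟩
  have hwpos : 0 < w := hw ▸ div_pos (by linarith : (0:ℝ) < 1 - α) hs2
  have hα1 : (1:ℝ) - α ≠ 0 := by intro h; linarith [h2]; 
  -- sqrt tends to atTop
  have hsqrtTop : Tendsto Real.sqrt atTop atTop := by
    apply tendsto_atTop_atTop.mpr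
    intro c
    refine ⟨(max c 0) ^ 2, fun t ht => ?_⟩
    calc c ≤ max c 0 := le_max_left _ _
      _ = Real.sqrt ((max c 0) ^ 2) := (Real.sqrt_sq (le_max_right _ _)).symm
      _ ≤ Real.sqrt t := Real.sqrt_le_sqrt ht
  -- constant relation
  have hc : 2 * γ * (1 - α) = (4 - 2 * Real.sqrt 2) * w := by
    rw [hγ, hw]
    field_simp
    nlinarith [s2]
  -- g expansion
  have hgform : ∀ h : ℝ, w - h ≠ 0 →
      g (v + h) = 2 * γ * (1 - α) + 2 * h ^ 2 / (w - h) := by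
    intro h hne
    have e1 : 1 - (v + h) = w - h := by
      rw [hv, hγ, hw]; field_simp; ring
    have e2 : α - (v + h) = (1 - Real.sqrt 2) * w - h := by
      rw [hv, hγ, hw]; field_simp; ring
    rw [hg, e1, e2, hc]
    field_simp
    linear_combination w ^ 2 * s2
  -- key identity
  have key : ∀ t r : ℝ, 0 < t → w - r / Real.sqrt t ≠ 0 →
      2 * γ * (1 - α) * t + -t * g (v + r / Real.sqrt t)
        = -(2 * r ^ 2 / (w - r / Real.sqrt t)) := by
    intro t r ht hne
    rw [hgform _ hne]
    have hr2 : (r / Real.sqrt t) ^ 2 = r ^ 2 / t := by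
      rw [div_pow, Real.sq_sqrt ht.le]
    have ht' : t ≠ 0 := ht.ne'
    have hcan : t * (r ^ 2 / t) = r ^ 2 := by field_simp
    rw [hr2]
    calc 2 * γ * (1 - α) * t +
          -t * (2 * γ * (1 - α) + 2 * (r ^ 2 / t) / (w - r / Real.sqrt t))
        = -(2 * (t * (r ^ 2 / t)) / (w - r / Real.sqrt t)) := by ring
      _ = -(2 * r ^ 2 / (w - r / Real.sqrt t)) := by rw [hcan]
  -- positivity helper
  have haux : ∀ (R t r : ℝ), |r| ≤ R → 2 * R / w + 1 ≤ Real.sqrt t →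
      0 < t ∧ w / 2 ≤ w - r / Real.sqrt t := by
    intro R t r hrR hst
    have hR0 : 0 ≤ R := le_trans (abs_nonneg r) hrR
    have hstpos : 0 < Real.sqrt t := lt_of_lt_of_le (by positivity) hst
    have ht : 0 < t := Real.sqrt_pos.mp hstpos
    refine ⟨ht, ?_⟩
    have h2R : 2 * R ≤ w * Real.sqrt t := by
      have hle := mul_le_mul_of_nonneg_left hst hwpos.le
      have hwne : w ≠ 0 := hwpos.ne'
      have hexp : w * (2 * R / w + 1) = 2 * R + w := by field_simp
      rw [hexp] at hle
      linarith
    have : r / Real.sqrt t ≤ w / 2 := by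
      rw [div_le_iff₀ hstpos]
      have : r ≤ R := le_trans (le_abs_self r) hrR
      nlinarith
    linarith
  -- rewrite expression as a single integral
  have hrw : ∀ t : ℝ,
      Real.exp (2 * γ * (1 - α) * t) *
          ∫ r in a..b, Real.exp (-t * g (v + r / Real.sqrt t))
        = ∫ r in a..b,
            Real.exp (2 * γ * (1 - α) * t + -t * g (v + r / Real.sqrt t)) := by
    intro t
    rw [← intervalIntegral.integral_const_mul]
    congr 1
    funext r
    rw [← Real.exp_add]
  have hfun : (fun t : ℝ => Real.exp (2 * γ * (1 - α) * t) *
        ∫ r in a..b, Real.exp (-t * g (v + r / Real.sqrt t)))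
      = fun t : ℝ => ∫ r in a..b,
          Real.exp (2 * γ * (1 - α) * t + -t * g (v + r / Real.sqrt t)) :=
    funext hrw
  rw [hfun]
  -- dominated convergence
  set M : ℝ := max |a| |b| with hM
  have hM0 : 0 ≤ M := le_trans (abs_nonneg a) (le_max_left _ _)
  have habs : ∀ r ∈ Set.uIoc a b, |r| ≤ M := by
    intro r hr
    have h1r : r ≤ M := le_trans hr.2 (max_le_max (le_abs_self a) (le_abs_self b))
    have h2r : -M ≤ r := by
      have : -M ≤ min a b :=
        le_min (le_trans (neg_le_neg (le_max_left _ _)) (neg_abs_le a))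
          (le_trans (neg_le_neg (le_max_right _ _)) (neg_abs_le b))
      exact le_trans this hr.1.le
    exact abs_le.mpr ⟨h2r, h1r⟩
  apply intervalIntegral.tendsto_integral_filter_of_dominated_convergence
    (fun _ : ℝ => (1 : ℝ))
  · -- measurability
    filter_upwards with t
    have hgfun : g = fun u => (1 - u) + (α - u) ^ 2 / (1 - u) := funext hg
    apply Measurable.aestronglyMeasurable
    rw [hgfun]
    apply Real.measurable_exp.comp
    apply Measurable.add measurable_const
    apply Measurable.mul measurable_const
    apply Measurable.add
    · fun_prop
    · apply Measurable.div <;> fun_prop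
  · -- bound
    filter_upwards [hsqrtTop.eventually_ge_atTop (2 * M / w + 1)] with t hst
    filter_upwards with r hr
    obtain ⟨ht, hge⟩ := haux M t r (habs r hr) hst
    have hne : w - r / Real.sqrt t ≠ 0 :=
      (lt_of_lt_of_le (half_pos hwpos) hge).ne'
    rw [Real.norm_eq_abs, Real.abs_exp, Real.exp_le_one_iff, key t r ht hne]
    have : 0 < w - r / Real.sqrt t := by linarith
    have h0 : 0 ≤ 2 * r ^ 2 / (w - r / Real.sqrt t) := by positivity
    linarith
  · exact intervalIntegrable_const
  · -- pointwise limit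
    filter_upwards with r _
    have hrt : Tendsto (fun t : ℝ => r / Real.sqrt t) atTop (𝓝 0) :=
      Tendsto.div_atTop tendsto_const_nhds hsqrtTop
    have inner : Tendsto (fun t : ℝ => w - r / Real.sqrt t) atTop (𝓝 w) := by
      simpa using tendsto_const_nhds.sub hrt
    have inner2 : Tendsto (fun t : ℝ => -(2 * r ^ 2 / (w - r / Real.sqrt t)))
        atTop (𝓝 (-(2 * r ^ 2 / w))) :=
      (Tendsto.div tendsto_const_nhds inner hwpos.ne').neg
    have main := (Real.continuous_exp.tendsto _).comp inner2
    have heq : -(2 * r ^ 2 / w) = -(2 * Real.sqrt 2 / (1 - α)) * r ^ 2 := by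
      rw [hw]; field_simp
    rw [heq] at main
    apply main.congr'
    filter_upwards [hsqrtTop.eventually_ge_atTop (2 * |r| / w + 1)] with t hst
    obtain ⟨ht, hge⟩ := haux |r| t r le_rfl hst
    have hne : w - r / Real.sqrt t ≠ 0 := by
      have : 0 < w - r / Real.sqrt t := by linarith
      positivity
    simp only [Function.comp]
    rw [← key t r ht hne]
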